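/- Let ε > 0 and δ ∈ (0,1) satisfy δ·(e^ε + 1) ≤ 1. Let w⁺(x) = ((e^ε − 1)/(e^ε + 1))·exp(−ε·|x − μ⁺|) with μ⁺ = 1 − (1/ε)·ln(δ·(e^ε + 1)), and w⁻(x) = ((e^ε − 1)/(e^ε + 1))·exp(−ε·|x − μ⁻|) with μ⁻ = (1/ε)·ln(δ·(e^ε + 1)) − 1, both on ℤ. For a histogram n : Fin m → ℤ, define the bounding-histogram mechanism whose output measure on a set S ⊆ (Fin m → ℤ) × (Fin m → ℤ) is G_n(S) = ∑ over pairs (z⁺, z⁻) of integer vectors with (n + max(0, z⁺), n + min(0, z⁻)) ∈ S of ∏_i w⁺(z⁺_i) · ∏_i w⁻(z⁻_i), where the max/min are taken coordinatewise. Then for any two histograms n, n′ : Fin m → ℤ that agree on all coordinates except one coordinate j where |n_j − n′_j| = 1, and for any such set S, G_n(S) ≤ e^{2ε} · G_{n′}(S) + 2δ. -/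

import Mathlib

open ENNReal

namespace SpecialDP

lemma geom_tsum {ε : ℝ} (hε : 0 < ε) (c : ℝ) :
    ∑' k : ℕ, c * Real.exp (-ε) ^ k = c * (1 - Real.exp (-ε))⁻¹ := by
  rw [tsum_mul_left, tsum_geometric_of_lt_one (Real.exp_nonneg _)
    (Real.exp_lt_one_iff.mpr (by linarith))]

lemma geom_summable {ε : ℝ} (hε : 0 < ε) (c : ℝ) :
    Summable (fun k : ℕ => c * Real.exp (-ε) ^ k) :=
  (summable_geometric_of_lt_one (Real.exp_nonneg _)
    (Real.exp_lt_one_iff.mpr (by linarith))).mul_left c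

lemma tsum_lower {ε μ c : ℝ} (hε : 0 < ε) (hc : 0 ≤ c) (M : ℤ) (hM : (M : ℝ) ≤ μ) :
    ∑' z : ℤ, (if z ≤ M then ENNReal.ofReal (c * Real.exp (-ε * |(z : ℝ) - μ|)) else 0)
      = ENNReal.ofReal (c * Real.exp (-ε * (μ - M)) * (1 - Real.exp (-ε))⁻¹) := by
  have hinj : Function.Injective (fun k : ℕ => M - (k : ℤ)) := by
    intro a b h; simpa using h
  rw [← Function.Injective.tsum_eq hinj ?_]
  · have hval : ∀ k : ℕ, (if M - (k:ℤ) ≤ M then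
        ENNReal.ofReal (c * Real.exp (-ε * |((M - (k:ℤ) : ℤ) : ℝ) - μ|)) else 0)
        = ENNReal.ofReal ((c * Real.exp (-ε * (μ - M))) * Real.exp (-ε) ^ k) := by
      intro k
      rw [if_pos (by omega)]
      congr 1
      have habs : |((M - (k:ℤ) : ℤ) : ℝ) - μ| = (μ - M) + k := by
        push_cast
        rw [abs_of_nonpos (by push_cast; nlinarith [Nat.cast_nonneg (α := ℝ) k])]
        ring
      rw [habs, mul_assoc]
      congr 1
      rw [show -ε * ((μ - M) + k) = -ε * (μ - M) + (k : ℕ) * (-ε) by push_cast; ring,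
        Real.exp_add, Real.exp_nat_mul]
    simp_rw [hval]
    rw [ENNReal.ofReal_tsum_of_nonneg (fun k => by positivity) (geom_summable hε _) |>.symm,
      geom_tsum hε]
  · intro z hz
    simp only [Function.mem_support, ne_eq, ite_eq_right_iff, not_forall] at hz
    obtain ⟨h1, -⟩ := hz
    exact ⟨(M - z).toNat, by simp; omega⟩

lemma tsum_upper {ε μ c : ℝ} (hε : 0 < ε) (hc : 0 ≤ c) (M : ℤ) (hM : μ ≤ (M : ℝ) + 1) :
    ∑' z : ℤ, (if M + 1 ≤ z then ENNReal.ofReal (c * Real.exp (-ε * |(z : ℝ) - μ|)) else 0)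
      = ENNReal.ofReal (c * Real.exp (-ε * ((M:ℝ) + 1 - μ)) * (1 - Real.exp (-ε))⁻¹) := by
  have hinj : Function.Injective (fun k : ℕ => M + 1 + (k : ℤ)) := by
    intro a b h; simpa using h
  rw [← Function.Injective.tsum_eq hinj ?_]
  · have hval : ∀ k : ℕ, (if M + 1 ≤ M + 1 + (k:ℤ) then
        ENNReal.ofReal (c * Real.exp (-ε * |((M + 1 + (k:ℤ) : ℤ) : ℝ) - μ|)) else 0)
        = ENNReal.ofReal ((c * Real.exp (-ε * ((M:ℝ) + 1 - μ))) * Real.exp (-ε) ^ k) := by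
      intro k
      rw [if_pos (by omega)]
      congr 1
      have habs : |((M + 1 + (k:ℤ) : ℤ) : ℝ) - μ| = ((M:ℝ) + 1 - μ) + k := by
        push_cast
        rw [abs_of_nonneg (by push_cast; nlinarith [Nat.cast_nonneg (α := ℝ) k])]
        ring
      rw [habs, mul_assoc]
      congr 1
      rw [show -ε * (((M:ℝ) + 1 - μ) + k) = -ε * ((M:ℝ) + 1 - μ) + (k : ℕ) * (-ε) by push_cast; ring,
        Real.exp_add, Real.exp_nat_mul]
    simp_rw [hval]
    rw [ENNReal.ofReal_tsum_of_nonneg (fun k => by positivity) (geom_summable hε _) |>.symm,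
      geom_tsum hε]
  · intro z hz
    simp only [Function.mem_support, ne_eq, ite_eq_right_iff, not_forall] at hz
    obtain ⟨h1, -⟩ := hz
    exact ⟨(z - M - 1).toNat, by simp; omega⟩

lemma tsum_weight_le_one {ε : ℝ} (hε : 0 < ε) (μ : ℝ) :
    ∑' z : ℤ, ENNReal.ofReal
      (((Real.exp ε - 1) / (Real.exp ε + 1)) * Real.exp (-ε * |(z : ℝ) - μ|)) ≤ 1 := by
  set E := Real.exp ε with hE
  have hE1 : 1 < E := by rw [hE]; calc (1:ℝ) = Real.exp 0 := by simp
                                        _ < Real.exp ε := Real.exp_lt_exp.mpr hε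
  have hc : 0 ≤ (E - 1) / (E + 1) := div_nonneg (by linarith) (by linarith)
  set M : ℤ := ⌊μ⌋ with hM
  have hMle : (M : ℝ) ≤ μ := Int.floor_le μ
  have hMge : μ ≤ (M : ℝ) + 1 := le_of_lt (Int.lt_floor_add_one μ)
  have hsplit : ∀ z : ℤ, ENNReal.ofReal ((E - 1) / (E + 1) * Real.exp (-ε * |(z : ℝ) - μ|))
      = (if z ≤ M then ENNReal.ofReal ((E - 1) / (E + 1) * Real.exp (-ε * |(z : ℝ) - μ|)) else 0)
      + (if M + 1 ≤ z then ENNReal.ofReal ((E - 1) / (E + 1) * Real.exp (-ε * |(z : ℝ) - μ|)) else 0) := by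
    intro z
    rcases le_or_gt z M with h | h
    · rw [if_pos h, if_neg (by omega), add_zero]
    · rw [if_neg (by omega), if_pos (by omega), zero_add]
  set r := Real.exp (-ε) with hr
  have hEr : E * r = 1 := by rw [hE, hr, ← Real.exp_add]; simp
  have hr1 : r < 1 := by rw [hr]; calc Real.exp (-ε) < Real.exp 0 := Real.exp_lt_exp.mpr (by linarith)
                                      _ = 1 := Real.exp_zero
  have hr0 : 0 < r := Real.exp_pos _
  have h1r' : (0:ℝ) ≤ (1 - r)⁻¹ := inv_nonneg.mpr (by linarith)
  rw [tsum_congr hsplit, ENNReal.tsum_add, tsum_lower hε hc M hMle, tsum_upper hε hc M hMge,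
    ← ENNReal.ofReal_add
      (mul_nonneg (mul_nonneg hc (Real.exp_pos _).le) h1r')
      (mul_nonneg (mul_nonneg hc (Real.exp_pos _).le) h1r')]
  rw [show (1 : ℝ≥0∞) = ENNReal.ofReal 1 by simp]
  apply ENNReal.ofReal_le_ofReal
  set a := Real.exp (-ε * (μ - M)) with ha
  set b := Real.exp (-ε * ((M:ℝ) + 1 - μ)) with hb
  have ha1 : a ≤ 1 := Real.exp_le_one_iff.mpr (by nlinarith)
  have hb1 : b ≤ 1 := Real.exp_le_one_iff.mpr (by nlinarith)
  have ha0 : 0 < a := Real.exp_pos _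
  have hb0 : 0 < b := Real.exp_pos _
  have hab : a * b = r := by rw [ha, hb, ← Real.exp_add, hr]; congr 1; ring
  have h1r : (0:ℝ) < 1 - r := by linarith
  have key : (E - 1) / (E + 1) * a + (E - 1) / (E + 1) * b ≤ 1 - r := by
    have hsum : a + b ≤ 1 + r := by nlinarith
    have : (E - 1) / (E + 1) * (a + b) ≤ (E - 1) / (E + 1) * (1 + r) := by
      apply mul_le_mul_of_nonneg_left hsum hc
    have heq : (E - 1) / (E + 1) * (1 + r) = 1 - r := by
      rw [div_mul_eq_mul_div, div_eq_iff (by linarith)]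
      nlinarith
    nlinarith
  calc (E - 1) / (E + 1) * a * (1 - r)⁻¹ + (E - 1) / (E + 1) * b * (1 - r)⁻¹
      = ((E - 1) / (E + 1) * a + (E - 1) / (E + 1) * b) * (1 - r)⁻¹ := by ring
    _ ≤ (1 - r) * (1 - r)⁻¹ := by
        apply mul_le_mul_of_nonneg_right key (by positivity)
    _ = 1 := by field_simp

lemma tsum_nonpos_weight {ε δ : ℝ} (hε : 0 < ε) (hδ0 : 0 < δ)
    (hδε : δ * (Real.exp ε + 1) ≤ 1) (μp : ℝ)
    (hμp : μp = 1 - (1 / ε) * Real.log (δ * (Real.exp ε + 1))) :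
    ∑' z : ℤ, (if z ≤ 0 then ENNReal.ofReal
      (((Real.exp ε - 1) / (Real.exp ε + 1)) * Real.exp (-ε * |(z : ℝ) - μp|)) else 0)
      = ENNReal.ofReal δ := by
  set E := Real.exp ε with hE
  have hE1 : 1 < E := by
    rw [hE]; calc (1:ℝ) = Real.exp 0 := by simp
      _ < Real.exp ε := Real.exp_lt_exp.mpr hε
  have hc : 0 ≤ (E - 1) / (E + 1) := div_nonneg (by linarith) (by linarith)
  have hpos : 0 < δ * (E + 1) := by nlinarith
  have hL : Real.log (δ * (E + 1)) ≤ 0 := Real.log_nonpos (le_of_lt hpos) hδε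
  have hμ0 : ((0:ℤ) : ℝ) ≤ μp := by
    rw [hμp]
    have h2 : 0 ≤ (1/ε) * (-Real.log (δ * (E + 1))) :=
      mul_nonneg (by positivity) (neg_nonneg.mpr hL)
    push_cast; nlinarith [h2]
  rw [tsum_lower hε hc 0 hμ0]
  congr 1
  set r := Real.exp (-ε) with hr
  have hEr : E * r = 1 := by rw [hE, hr, ← Real.exp_add]; simp
  have hr1 : r < 1 := by
    rw [hr]; calc Real.exp (-ε) < Real.exp 0 := Real.exp_lt_exp.mpr (by linarith)
      _ = 1 := Real.exp_zero
  have hexp : Real.exp (-ε * (μp - (0:ℤ))) = r * (δ * (E + 1)) := by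
    have harg : -ε * (μp - ((0:ℤ):ℝ)) = -ε + Real.log (δ * (E + 1)) := by
      rw [hμp]; push_cast; field_simp; ring
    rw [harg, Real.exp_add, ← hr, Real.exp_log hpos]
  rw [hexp]
  have h1r : (1:ℝ) - r ≠ 0 := by linarith
  field_simp
  nlinarith [hEr]

lemma tsum_nonneg_weight {ε δ : ℝ} (hε : 0 < ε) (hδ0 : 0 < δ)
    (hδε : δ * (Real.exp ε + 1) ≤ 1) (μm : ℝ)
    (hμm : μm = (1 / ε) * Real.log (δ * (Real.exp ε + 1)) - 1) :
    ∑' z : ℤ, (if 0 ≤ z then ENNReal.ofReal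
      (((Real.exp ε - 1) / (Real.exp ε + 1)) * Real.exp (-ε * |(z : ℝ) - μm|)) else 0)
      = ENNReal.ofReal δ := by
  have hμp : -μm = 1 - (1 / ε) * Real.log (δ * (Real.exp ε + 1)) := by rw [hμm]; ring
  rw [← tsum_nonpos_weight hε hδ0 hδε (-μm) hμp]
  rw [← (Equiv.neg ℤ).tsum_eq (fun z => if z ≤ 0 then ENNReal.ofReal
      (((Real.exp ε - 1) / (Real.exp ε + 1)) * Real.exp (-ε * |(z : ℝ) - -μm|)) else 0)]
  apply tsum_congr
  intro z
  simp only [Equiv.neg_apply]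
  rcases le_or_gt 0 z with h | h
  · rw [if_pos h, if_pos (by omega)]
    congr 3
    push_cast
    rw [show -(z:ℝ) - -μm = -((z:ℝ) - μm) by ring, abs_neg]
  · rw [if_neg (by omega), if_neg (by omega)]

lemma weight_ratio {ε μ : ℝ} (hε : 0 < ε) {c : ℝ} (hc : 0 ≤ c) (x d : ℤ)
    (hd : |(d:ℝ)| ≤ 1) :
    c * Real.exp (-ε * |(x : ℝ) - μ|)
      ≤ Real.exp ε * (c * Real.exp (-ε * |((x + d : ℤ) : ℝ) - μ|)) := by
  have habs : |((x + d : ℤ) : ℝ) - μ| ≤ |(x:ℝ) - μ| + 1 := by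
    push_cast
    calc |(x:ℝ) + d - μ| ≤ |(x:ℝ) - μ| + |(d:ℝ)| := by
          have := abs_add_le ((x:ℝ) - μ) (d:ℝ); rw [show (x:ℝ) + d - μ = (x:ℝ) - μ + d by ring]; exact this
      _ ≤ |(x:ℝ) - μ| + 1 := by linarith
  have : Real.exp (-ε * |(x : ℝ) - μ|) ≤ Real.exp ε * Real.exp (-ε * |((x + d : ℤ) : ℝ) - μ|) := by
    rw [← Real.exp_add]
    apply Real.exp_le_exp.mpr
    nlinarith
  nlinarith [Real.exp_pos (-ε * |(x : ℝ) - μ|), Real.exp_pos (-ε * |((x + d : ℤ) : ℝ) - μ|)]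

lemma tsum_pi_prod : ∀ {k : ℕ} (g : Fin k → ℤ → ℝ≥0∞),
    ∑' x : Fin k → ℤ, ∏ i, g i (x i) = ∏ i, ∑' y : ℤ, g i y := by
  intro k
  induction k with
  | zero =>
    intro g
    rw [tsum_eq_single (fun i => Fin.elim0 i)
      (by intro b hb; exact absurd (Subsingleton.elim b _) hb)]
    simp
  | succ k ih =>
    intro g
    rw [← (Fin.consEquiv (fun _ : Fin (k+1) => ℤ)).tsum_eq]
    have hpt : ∀ p : ℤ × (Fin k → ℤ),
        (∏ i, g i ((Fin.consEquiv (fun _ : Fin (k+1) => ℤ)) p i))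
          = g 0 p.1 * ∏ i : Fin k, g i.succ (p.2 i) := by
      intro p
      rw [Fin.prod_univ_succ]
      simp [Fin.consEquiv]
    calc ∑' p : ℤ × (Fin k → ℤ), ∏ i, g i ((Fin.consEquiv (fun _ : Fin (k+1) => ℤ)) p i)
        = ∑' (a : ℤ) (b : Fin k → ℤ), g 0 a * ∏ i : Fin k, g i.succ (b i) := by
          rw [ENNReal.tsum_prod']; simp_rw [hpt]
      _ = (∑' y : ℤ, g 0 y) * ∑' b : Fin k → ℤ, ∏ i : Fin k, g i.succ (b i) := by
          simp_rw [ENNReal.tsum_mul_left]; rw [ENNReal.tsum_mul_right]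
      _ = ∏ i, ∑' y : ℤ, g i y := by
          rw [ih, Fin.prod_univ_succ]

lemma main_ennreal {m : ℕ} (Wp Wm : ℤ → ℝ≥0∞) (c dl : ℝ≥0∞)
    (hWp_sum : ∑' y : ℤ, Wp y ≤ 1) (hWm_sum : ∑' y : ℤ, Wm y ≤ 1)
    (hWp_bad : ∑' y : ℤ, (if y ≤ 0 then Wp y else 0) ≤ dl)
    (hWm_bad : ∑' y : ℤ, (if 0 ≤ y then Wm y else 0) ≤ dl)
    (d : ℤ) (hd : d = 1 ∨ d = -1)
    (hWp_ratio : ∀ y : ℤ, Wp y ≤ c * Wp (y + d))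
    (hWm_ratio : ∀ y : ℤ, Wm y ≤ c * Wm (y + d))
    (n n' : Fin m → ℤ) (j : Fin m)
    (hagree : ∀ i, i ≠ j → n i = n' i) (hdj : d = n j - n' j)
    (S : Set ((Fin m → ℤ) × (Fin m → ℤ))) :
    ∑' z : (Fin m → ℤ) × (Fin m → ℤ),
        S.indicator (fun _ => (∏ i, Wp (z.1 i)) * ∏ i, Wm (z.2 i))
          (fun i => n i + max 0 (z.1 i), fun i => n i + min 0 (z.2 i))
      ≤ c * c * ∑' z : (Fin m → ℤ) × (Fin m → ℤ),
        S.indicator (fun _ => (∏ i, Wp (z.1 i)) * ∏ i, Wm (z.2 i))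
          (fun i => n' i + max 0 (z.1 i), fun i => n' i + min 0 (z.2 i)) + (dl + dl) := by
  classical
  set A : Set ((Fin m → ℤ) × (Fin m → ℤ)) :=
    {z | (0 ≤ z.1 j ∧ 0 ≤ z.1 j + d) ∧ (z.2 j ≤ 0 ∧ z.2 j + d ≤ 0)} with hA
  set T : (Fin m → ℤ) × (Fin m → ℤ) → (Fin m → ℤ) × (Fin m → ℤ) :=
    fun z => (Function.update z.1 j (z.1 j + d), Function.update z.2 j (z.2 j + d)) with hT
  have hTinj : Function.Injective T := by
    intro z w h
    rw [hT] at h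
    have h1 := congrArg Prod.fst h
    have h2 := congrArg Prod.snd h
    simp only at h1 h2
    have e1 : z.1 = w.1 := by
      funext i
      by_cases hi : i = j
      · subst hi
        have := congrFun h1 i
        simp only [Function.update_self] at this
        omega
      · have := congrFun h1 i
        rwa [Function.update_of_ne hi, Function.update_of_ne hi] at this
    have e2 : z.2 = w.2 := by
      funext i
      by_cases hi : i = j
      · subst hi
        have := congrFun h2 i
        simp only [Function.update_self] at this
        omega
      · have := congrFun h2 i
        rwa [Function.update_of_ne hi, Function.update_of_ne hi] at this
    exact Prod.ext e1 e2
  set Gp : Fin m → ℤ → ℝ≥0∞ :=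
    fun i y => if i = j then (if y ≤ 0 then Wp y else 0) else Wp y with hGp
  set Gm : Fin m → ℤ → ℝ≥0∞ :=
    fun i y => if i = j then (if 0 ≤ y then Wm y else 0) else Wm y with hGm
  -- the function for n'
  set g : (Fin m → ℤ) × (Fin m → ℤ) → ℝ≥0∞ :=
    fun w => S.indicator (fun _ => (∏ i, Wp (w.1 i)) * ∏ i, Wm (w.2 i))
      (fun i => n' i + max 0 (w.1 i), fun i => n' i + min 0 (w.2 i)) with hg
  -- pointwise majorization
  have hpt : ∀ z : (Fin m → ℤ) × (Fin m → ℤ),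
      S.indicator (fun _ => (∏ i, Wp (z.1 i)) * ∏ i, Wm (z.2 i))
          (fun i => n i + max 0 (z.1 i), fun i => n i + min 0 (z.2 i))
        ≤ A.indicator (fun z => S.indicator (fun _ => (∏ i, Wp (z.1 i)) * ∏ i, Wm (z.2 i))
            (fun i => n i + max 0 (z.1 i), fun i => n i + min 0 (z.2 i))) z
          + ((∏ i, Gp i (z.1 i)) * ∏ i, Wm (z.2 i))
          + ((∏ i, Wp (z.1 i)) * ∏ i, Gm i (z.2 i)) := by
    intro z
    by_cases hz : z ∈ A
    · rw [Set.indicator_of_mem hz]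
      exact le_add_right (le_add_right le_rfl)
    · have hle : S.indicator (fun _ => (∏ i, Wp (z.1 i)) * ∏ i, Wm (z.2 i))
          (fun i => n i + max 0 (z.1 i), fun i => n i + min 0 (z.2 i))
          ≤ (∏ i, Wp (z.1 i)) * ∏ i, Wm (z.2 i) :=
        Set.indicator_le_self _ _ _
      rw [hA] at hz
      simp only [Set.mem_setOf_eq, not_and_or] at hz
      rcases hz with hz | hz
      · -- bad positive coordinate: z.1 j ≤ 0
        have hbad : z.1 j ≤ 0 := by rcases hd with h | h <;> omega
        have heq : (∏ i, Gp i (z.1 i)) = ∏ i, Wp (z.1 i) := by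
          apply Finset.prod_congr rfl
          intro i _
          by_cases hi : i = j
          · subst hi; simp [hGp, hbad]
          · rw [hGp]; simp only [if_neg hi]
        rw [heq]
        exact hle.trans (le_add_right (self_le_add_left _ _))
      · have hbad : 0 ≤ z.2 j := by rcases hd with h | h <;> omega
        have heq : (∏ i, Gm i (z.2 i)) = ∏ i, Wm (z.2 i) := by
          apply Finset.prod_congr rfl
          intro i _
          by_cases hi : i = j
          · subst hi; simp [hGm, hbad]
          · rw [hGm]; simp only [if_neg hi]
        rw [heq]
        exact hle.trans (self_le_add_left _ _)
  -- good-set term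
  have hA_le : ∀ z : (Fin m → ℤ) × (Fin m → ℤ),
      A.indicator (fun z => S.indicator (fun _ => (∏ i, Wp (z.1 i)) * ∏ i, Wm (z.2 i))
          (fun i => n i + max 0 (z.1 i), fun i => n i + min 0 (z.2 i))) z
        ≤ c * c * g (T z) := by
    intro z
    by_cases hz : z ∈ A
    · rw [Set.indicator_of_mem hz]
      have hzA := hz
      rw [hA] at hzA
      simp only [Set.mem_setOf_eq] at hzA
      obtain ⟨⟨hp1, hp2⟩, hm1, hm2⟩ := hzA
      -- outputs agree
      have hout : ((fun i => n i + max 0 (z.1 i), fun i => n i + min 0 (z.2 i))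
            : (Fin m → ℤ) × (Fin m → ℤ))
          = (fun i => n' i + max 0 ((T z).1 i), fun i => n' i + min 0 ((T z).2 i)) := by
        rw [hT]
        apply Prod.ext
        · funext i
          by_cases hi : i = j
          · subst hi
            simp only [Function.update_self]
            rw [max_eq_right hp1, max_eq_right hp2]
            omega
          · simp only [Function.update_of_ne hi]
            rw [hagree i hi]
        · funext i
          by_cases hi : i = j
          · subst hi
            simp only [Function.update_self]
            rw [min_eq_right hm1, min_eq_right hm2]
            omega
          · simp only [Function.update_of_ne hi]
            rw [hagree i hi]
      -- weights ratio
      have hprod1 : (∏ i, Wp (z.1 i)) ≤ c * ∏ i, Wp ((T z).1 i) := by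
        rw [hT]
        simp only
        rw [← Finset.mul_prod_erase Finset.univ (fun i => Wp (z.1 i)) (Finset.mem_univ j),
          ← Finset.mul_prod_erase Finset.univ
            (fun i => Wp (Function.update z.1 j (z.1 j + d) i)) (Finset.mem_univ j)]
        have herase : ∏ i ∈ Finset.univ.erase j, Wp (Function.update z.1 j (z.1 j + d) i)
            = ∏ i ∈ Finset.univ.erase j, Wp (z.1 i) := by
          apply Finset.prod_congr rfl
          intro i hi
          rw [Function.update_of_ne (Finset.ne_of_mem_erase hi)]
        rw [herase, Function.update_self, ← mul_assoc]
        exact mul_le_mul' (hWp_ratio (z.1 j)) le_rfl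
      have hprod2 : (∏ i, Wm (z.2 i)) ≤ c * ∏ i, Wm ((T z).2 i) := by
        rw [hT]
        simp only
        rw [← Finset.mul_prod_erase Finset.univ (fun i => Wm (z.2 i)) (Finset.mem_univ j),
          ← Finset.mul_prod_erase Finset.univ
            (fun i => Wm (Function.update z.2 j (z.2 j + d) i)) (Finset.mem_univ j)]
        have herase : ∏ i ∈ Finset.univ.erase j, Wm (Function.update z.2 j (z.2 j + d) i)
            = ∏ i ∈ Finset.univ.erase j, Wm (z.2 i) := by
          apply Finset.prod_congr rfl
          intro i hi
          rw [Function.update_of_ne (Finset.ne_of_mem_erase hi)]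
        rw [herase, Function.update_self, ← mul_assoc]
        exact mul_le_mul' (hWm_ratio (z.2 j)) le_rfl
      have hprod : (∏ i, Wp (z.1 i)) * ∏ i, Wm (z.2 i)
          ≤ c * c * ((∏ i, Wp ((T z).1 i)) * ∏ i, Wm ((T z).2 i)) := by
        calc (∏ i, Wp (z.1 i)) * ∏ i, Wm (z.2 i)
            ≤ (c * ∏ i, Wp ((T z).1 i)) * (c * ∏ i, Wm ((T z).2 i)) :=
              mul_le_mul' hprod1 hprod2
          _ = c * c * ((∏ i, Wp ((T z).1 i)) * ∏ i, Wm ((T z).2 i)) := by ring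
      rw [hg]
      simp only
      rw [hout]
      by_cases hmem : ((fun i => n' i + max 0 ((T z).1 i), fun i => n' i + min 0 ((T z).2 i))
          : (Fin m → ℤ) × (Fin m → ℤ)) ∈ S
      · rw [Set.indicator_of_mem hmem, Set.indicator_of_mem hmem]
        exact hprod
      · rw [Set.indicator_of_notMem hmem, Set.indicator_of_notMem hmem, mul_zero]
    · rw [Set.indicator_of_notMem hz]
      exact zero_le
  have hAsum : ∑' z : (Fin m → ℤ) × (Fin m → ℤ),
      A.indicator (fun z => S.indicator (fun _ => (∏ i, Wp (z.1 i)) * ∏ i, Wm (z.2 i))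
          (fun i => n i + max 0 (z.1 i), fun i => n i + min 0 (z.2 i))) z
        ≤ c * c * ∑' w : (Fin m → ℤ) × (Fin m → ℤ), g w := by
    calc ∑' z, A.indicator (fun z => S.indicator
            (fun _ => (∏ i, Wp (z.1 i)) * ∏ i, Wm (z.2 i))
            (fun i => n i + max 0 (z.1 i), fun i => n i + min 0 (z.2 i))) z
        ≤ ∑' z, c * c * g (T z) := ENNReal.tsum_le_tsum hA_le
      _ = c * c * ∑' z, g (T z) := ENNReal.tsum_mul_left
      _ ≤ c * c * ∑' w, g w :=
          mul_le_mul' le_rfl (ENNReal.tsum_comp_le_tsum_of_injective hTinj g)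
  -- bad positive term
  have hBp : ∑' z : (Fin m → ℤ) × (Fin m → ℤ),
      (∏ i, Gp i (z.1 i)) * ∏ i, Wm (z.2 i) ≤ dl := by
    rw [ENNReal.tsum_prod']
    simp_rw [ENNReal.tsum_mul_left, ENNReal.tsum_mul_right]
    rw [tsum_pi_prod, tsum_pi_prod]
    have h1 : (∏ i, ∑' y : ℤ, Gp i y) ≤ dl := by
      rw [← Finset.mul_prod_erase Finset.univ (fun i => ∑' y : ℤ, Gp i y) (Finset.mem_univ j)]
      have hj : (∑' y : ℤ, Gp j y) ≤ dl := by
        refine le_trans (le_of_eq (tsum_congr fun y => ?_)) hWp_bad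
        simp [hGp]
      have hrest : (∏ i ∈ Finset.univ.erase j, ∑' y : ℤ, Gp i y) ≤ 1 := by
        apply Finset.prod_le_one (fun i _ => zero_le)
        intro i hi
        refine le_trans (le_of_eq (tsum_congr fun y => ?_)) hWp_sum
        rw [hGp]; simp only [if_neg (Finset.ne_of_mem_erase hi)]
      calc (∑' y : ℤ, Gp j y) * ∏ i ∈ Finset.univ.erase j, ∑' y : ℤ, Gp i y
          ≤ dl * 1 := mul_le_mul' hj hrest
        _ = dl := mul_one dl
    have h2 : (∏ i : Fin m, ∑' y : ℤ, Wm y) ≤ 1 :=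
      Finset.prod_le_one (fun i _ => zero_le) (fun i _ => hWm_sum)
    calc (∏ i, ∑' y : ℤ, Gp i y) * ∏ i : Fin m, ∑' y : ℤ, Wm y
        ≤ dl * 1 := mul_le_mul' h1 h2
      _ = dl := mul_one dl
  -- bad negative term
  have hBm : ∑' z : (Fin m → ℤ) × (Fin m → ℤ),
      (∏ i, Wp (z.1 i)) * ∏ i, Gm i (z.2 i) ≤ dl := by
    rw [ENNReal.tsum_prod']
    simp_rw [ENNReal.tsum_mul_left, ENNReal.tsum_mul_right]
    rw [tsum_pi_prod, tsum_pi_prod]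
    have h1 : (∏ i, ∑' y : ℤ, Gm i y) ≤ dl := by
      rw [← Finset.mul_prod_erase Finset.univ (fun i => ∑' y : ℤ, Gm i y) (Finset.mem_univ j)]
      have hj : (∑' y : ℤ, Gm j y) ≤ dl := by
        refine le_trans (le_of_eq (tsum_congr fun y => ?_)) hWm_bad
        simp [hGm]
      have hrest : (∏ i ∈ Finset.univ.erase j, ∑' y : ℤ, Gm i y) ≤ 1 := by
        apply Finset.prod_le_one (fun i _ => zero_le)
        intro i hi
        refine le_trans (le_of_eq (tsum_congr fun y => ?_)) hWm_sum
        rw [hGm]; simp only [if_neg (Finset.ne_of_mem_erase hi)]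
      calc (∑' y : ℤ, Gm j y) * ∏ i ∈ Finset.univ.erase j, ∑' y : ℤ, Gm i y
          ≤ dl * 1 := mul_le_mul' hj hrest
        _ = dl := mul_one dl
    have h2 : (∏ i : Fin m, ∑' y : ℤ, Wp y) ≤ 1 :=
      Finset.prod_le_one (fun i _ => zero_le) (fun i _ => hWp_sum)
    calc (∏ i : Fin m, ∑' y : ℤ, Wp y) * ∏ i, ∑' y : ℤ, Gm i y
        ≤ 1 * dl := mul_le_mul' h2 h1
      _ = dl := one_mul dl
  calc ∑' z : (Fin m → ℤ) × (Fin m → ℤ),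
        S.indicator (fun _ => (∏ i, Wp (z.1 i)) * ∏ i, Wm (z.2 i))
          (fun i => n i + max 0 (z.1 i), fun i => n i + min 0 (z.2 i))
      ≤ ∑' z : (Fin m → ℤ) × (Fin m → ℤ),
        (A.indicator (fun z => S.indicator (fun _ => (∏ i, Wp (z.1 i)) * ∏ i, Wm (z.2 i))
            (fun i => n i + max 0 (z.1 i), fun i => n i + min 0 (z.2 i))) z
          + ((∏ i, Gp i (z.1 i)) * ∏ i, Wm (z.2 i))
          + ((∏ i, Wp (z.1 i)) * ∏ i, Gm i (z.2 i))) := ENNReal.tsum_le_tsum hpt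
    _ = (∑' z : (Fin m → ℤ) × (Fin m → ℤ),
          A.indicator (fun z => S.indicator (fun _ => (∏ i, Wp (z.1 i)) * ∏ i, Wm (z.2 i))
            (fun i => n i + max 0 (z.1 i), fun i => n i + min 0 (z.2 i))) z)
        + (∑' z : (Fin m → ℤ) × (Fin m → ℤ), (∏ i, Gp i (z.1 i)) * ∏ i, Wm (z.2 i))
        + (∑' z : (Fin m → ℤ) × (Fin m → ℤ), (∏ i, Wp (z.1 i)) * ∏ i, Gm i (z.2 i)) := by
          rw [ENNReal.tsum_add, ENNReal.tsum_add]
    _ ≤ c * c * (∑' w : (Fin m → ℤ) × (Fin m → ℤ), g w) + dl + dl :=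
          add_le_add (add_le_add hAsum hBp) hBm
    _ = c * c * (∑' w : (Fin m → ℤ) × (Fin m → ℤ), g w) + (dl + dl) := by
          rw [add_assoc]

end SpecialDP



/-- **(2ε, 2δ)-DP of the bounding-histogram mechanism.**
The pair `(h⁺, h⁻)` is released by adding independent positive one-sided
noise `max 0 (z⁺ i)` (weight `w⁺`, center `μ⁺`) and negative one-sided noise
`min 0 (z⁻ i)` (weight `w⁻`, center `μ⁻`) to every bin.  For histograms
`n, n'` differing by `1` in exactly one bin `j`,
`G n S ≤ e^{2ε} · G n' S + 2δ` for every output set `S`. -/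
theorem bounding_histogram_dp
    (ε δ : ℝ) (hε : 0 < ε) (hδ : δ ∈ Set.Ioo (0 : ℝ) 1)
    (hδε : δ * (Real.exp ε + 1) ≤ 1)
    (μp μm : ℝ)
    (hμp : μp = 1 - (1 / ε) * Real.log (δ * (Real.exp ε + 1)))
    (hμm : μm = (1 / ε) * Real.log (δ * (Real.exp ε + 1)) - 1)
    (wp wm : ℤ → ℝ)
    (hwp : ∀ x : ℤ, wp x =
      ((Real.exp ε - 1) / (Real.exp ε + 1)) * Real.exp (-ε * |(x : ℝ) - μp|))
    (hwm : ∀ x : ℤ, wm x =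
      ((Real.exp ε - 1) / (Real.exp ε + 1)) * Real.exp (-ε * |(x : ℝ) - μm|))
    (m : ℕ)
    (G : (Fin m → ℤ) → Set ((Fin m → ℤ) × (Fin m → ℤ)) → ℝ)
    (hG : ∀ (n : Fin m → ℤ) (S : Set ((Fin m → ℤ) × (Fin m → ℤ))),
      G n S = ∑' z : (Fin m → ℤ) × (Fin m → ℤ),
        S.indicator (fun _ => (∏ i, wp (z.1 i)) * ∏ i, wm (z.2 i))
          (fun i => n i + max 0 (z.1 i), fun i => n i + min 0 (z.2 i)))
    (n n' : Fin m → ℤ) (j : Fin m)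
    (hagree : ∀ i, i ≠ j → n i = n' i) (hj : |n j - n' j| = 1)
    (S : Set ((Fin m → ℤ) × (Fin m → ℤ))) :
    G n S ≤ Real.exp (2 * ε) * G n' S + 2 * δ := by
  obtain ⟨hδ0, hδ1⟩ := hδ
  have hE1 : 1 < Real.exp ε := by
    calc (1:ℝ) = Real.exp 0 := by simp
      _ < Real.exp ε := Real.exp_lt_exp.mpr hε
  have hc0 : (0:ℝ) ≤ (Real.exp ε - 1) / (Real.exp ε + 1) :=
    div_nonneg (by linarith) (by linarith)
  have hwp_nonneg : ∀ x : ℤ, 0 ≤ wp x := fun x => by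
    rw [hwp]; exact mul_nonneg hc0 (Real.exp_nonneg _)
  have hwm_nonneg : ∀ x : ℤ, 0 ≤ wm x := fun x => by
    rw [hwm]; exact mul_nonneg hc0 (Real.exp_nonneg _)
  set Wp : ℤ → ℝ≥0∞ := fun y => ENNReal.ofReal (wp y) with hWp
  set Wm : ℤ → ℝ≥0∞ := fun y => ENNReal.ofReal (wm y) with hWm
  -- basic sum facts
  have hWp_sum : ∑' y : ℤ, Wp y ≤ 1 := by
    refine le_trans (le_of_eq (tsum_congr fun y => ?_)) (SpecialDP.tsum_weight_le_one hε μp)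
    rw [hWp]; simp only; rw [hwp y]
  have hWm_sum : ∑' y : ℤ, Wm y ≤ 1 := by
    refine le_trans (le_of_eq (tsum_congr fun y => ?_)) (SpecialDP.tsum_weight_le_one hε μm)
    rw [hWm]; simp only; rw [hwm y]
  have hWp_bad : ∑' y : ℤ, (if y ≤ 0 then Wp y else 0) ≤ ENNReal.ofReal δ := by
    refine le_trans (le_of_eq (tsum_congr fun y => ?_))
      (le_of_eq (SpecialDP.tsum_nonpos_weight hε hδ0 hδε μp hμp))
    rw [hWp]; simp only; rw [hwp y]
  have hWm_bad : ∑' y : ℤ, (if 0 ≤ y then Wm y else 0) ≤ ENNReal.ofReal δ := by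
    refine le_trans (le_of_eq (tsum_congr fun y => ?_))
      (le_of_eq (SpecialDP.tsum_nonneg_weight hε hδ0 hδε μm hμm))
    rw [hWm]; simp only; rw [hwm y]
  set d : ℤ := n j - n' j with hdj
  have hd : d = 1 ∨ d = -1 := by
    rw [hdj]
    rcases abs_eq (by norm_num : (0:ℤ) ≤ 1) |>.mp hj with h | h
    · exact Or.inl h
    · exact Or.inr h
  have hdabs : |(d : ℝ)| ≤ 1 := by
    rcases hd with h | h <;> rw [h] <;> norm_num
  have hWp_ratio : ∀ y : ℤ, Wp y ≤ ENNReal.ofReal (Real.exp ε) * Wp (y + d) := by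
    intro y
    rw [hWp]; simp only
    rw [← ENNReal.ofReal_mul (Real.exp_nonneg ε)]
    apply ENNReal.ofReal_le_ofReal
    rw [hwp y, hwp (y + d)]
    exact SpecialDP.weight_ratio hε hc0 y d hdabs
  have hWm_ratio : ∀ y : ℤ, Wm y ≤ ENNReal.ofReal (Real.exp ε) * Wm (y + d) := by
    intro y
    rw [hWm]; simp only
    rw [← ENNReal.ofReal_mul (Real.exp_nonneg ε)]
    apply ENNReal.ofReal_le_ofReal
    rw [hwm y, hwm (y + d)]
    exact SpecialDP.weight_ratio hε hc0 y d hdabs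
  have key := SpecialDP.main_ennreal Wp Wm (ENNReal.ofReal (Real.exp ε)) (ENNReal.ofReal δ)
    hWp_sum hWm_sum hWp_bad hWm_bad d hd hWp_ratio hWm_ratio n n' j hagree hdj S
  -- conversion to reals
  have hfin : ∀ (ν : Fin m → ℤ) (z : (Fin m → ℤ) × (Fin m → ℤ)),
      S.indicator (fun _ => (∏ i, Wp (z.1 i)) * ∏ i, Wm (z.2 i))
        (fun i => ν i + max 0 (z.1 i), fun i => ν i + min 0 (z.2 i)) ≠ ⊤ := by
    intro ν z
    by_cases hmem : ((fun i => ν i + max 0 (z.1 i), fun i => ν i + min 0 (z.2 i))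
        : (Fin m → ℤ) × (Fin m → ℤ)) ∈ S
    · rw [Set.indicator_of_mem hmem]
      exact ENNReal.mul_ne_top (ENNReal.prod_ne_top fun _ _ => ENNReal.ofReal_ne_top)
        (ENNReal.prod_ne_top fun _ _ => ENNReal.ofReal_ne_top)
    · rw [Set.indicator_of_notMem hmem]
      exact ENNReal.zero_ne_top
  have hGconv : ∀ ν : Fin m → ℤ, G ν S =
      (∑' z : (Fin m → ℤ) × (Fin m → ℤ),
        S.indicator (fun _ => (∏ i, Wp (z.1 i)) * ∏ i, Wm (z.2 i))
          (fun i => ν i + max 0 (z.1 i), fun i => ν i + min 0 (z.2 i))).toReal := by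
    intro ν
    rw [hG ν S, ENNReal.tsum_toReal_eq (hfin ν)]
    apply tsum_congr
    intro z
    by_cases hmem : ((fun i => ν i + max 0 (z.1 i), fun i => ν i + min 0 (z.2 i))
        : (Fin m → ℤ) × (Fin m → ℤ)) ∈ S
    · rw [Set.indicator_of_mem hmem, Set.indicator_of_mem hmem, ENNReal.toReal_mul]
      rw [hWp, hWm]
      simp only
      rw [← ENNReal.ofReal_prod_of_nonneg (fun i _ => hwp_nonneg (z.1 i)),
        ← ENNReal.ofReal_prod_of_nonneg (fun i _ => hwm_nonneg (z.2 i)),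
        ENNReal.toReal_ofReal (Finset.prod_nonneg fun i _ => hwp_nonneg (z.1 i)),
        ENNReal.toReal_ofReal (Finset.prod_nonneg fun i _ => hwm_nonneg (z.2 i))]
    · rw [Set.indicator_of_notMem hmem, Set.indicator_of_notMem hmem, ENNReal.toReal_zero]
  -- finiteness of the n' sum
  have hY : (∑' z : (Fin m → ℤ) × (Fin m → ℤ),
      S.indicator (fun _ => (∏ i, Wp (z.1 i)) * ∏ i, Wm (z.2 i))
        (fun i => n' i + max 0 (z.1 i), fun i => n' i + min 0 (z.2 i))) ≤ 1 := by
    have step1 : (∑' z : (Fin m → ℤ) × (Fin m → ℤ),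
        S.indicator (fun _ => (∏ i, Wp (z.1 i)) * ∏ i, Wm (z.2 i))
          (fun i => n' i + max 0 (z.1 i), fun i => n' i + min 0 (z.2 i)))
        ≤ ∑' z : (Fin m → ℤ) × (Fin m → ℤ), (∏ i, Wp (z.1 i)) * ∏ i, Wm (z.2 i) :=
      ENNReal.tsum_le_tsum fun z => Set.indicator_le_self _ _ _
    have step2 : (∑' z : (Fin m → ℤ) × (Fin m → ℤ),
        (∏ i, Wp (z.1 i)) * ∏ i, Wm (z.2 i)) ≤ 1 := by
      rw [ENNReal.tsum_prod']
      simp_rw [ENNReal.tsum_mul_left, ENNReal.tsum_mul_right]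
      rw [SpecialDP.tsum_pi_prod, SpecialDP.tsum_pi_prod]
      calc (∏ _i : Fin m, ∑' y : ℤ, Wp y) * ∏ _i : Fin m, ∑' y : ℤ, Wm y
          ≤ 1 * 1 := mul_le_mul'
            (Finset.prod_le_one (fun i _ => zero_le) (fun i _ => hWp_sum))
            (Finset.prod_le_one (fun i _ => zero_le) (fun i _ => hWm_sum))
        _ = 1 := one_mul 1
    exact step1.trans step2
  have hY_ne_top : (∑' z : (Fin m → ℤ) × (Fin m → ℤ),
      S.indicator (fun _ => (∏ i, Wp (z.1 i)) * ∏ i, Wm (z.2 i))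
        (fun i => n' i + max 0 (z.1 i), fun i => n' i + min 0 (z.2 i))) ≠ ⊤ :=
    ne_top_of_le_ne_top ENNReal.one_ne_top hY
  have hRHS_ne_top : ENNReal.ofReal (Real.exp ε) * ENNReal.ofReal (Real.exp ε) *
      (∑' z : (Fin m → ℤ) × (Fin m → ℤ),
        S.indicator (fun _ => (∏ i, Wp (z.1 i)) * ∏ i, Wm (z.2 i))
          (fun i => n' i + max 0 (z.1 i), fun i => n' i + min 0 (z.2 i)))
      + (ENNReal.ofReal δ + ENNReal.ofReal δ) ≠ ⊤ := by
    apply ENNReal.add_ne_top.mpr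
    constructor
    · exact ENNReal.mul_ne_top (ENNReal.mul_ne_top ENNReal.ofReal_ne_top ENNReal.ofReal_ne_top)
        hY_ne_top
    · exact ENNReal.add_ne_top.mpr ⟨ENNReal.ofReal_ne_top, ENNReal.ofReal_ne_top⟩
  have hfinal := ENNReal.toReal_mono hRHS_ne_top key
  rw [← hGconv n] at hfinal
  rw [ENNReal.toReal_add (ENNReal.mul_ne_top
      (ENNReal.mul_ne_top ENNReal.ofReal_ne_top ENNReal.ofReal_ne_top) hY_ne_top)
      (ENNReal.add_ne_top.mpr ⟨ENNReal.ofReal_ne_top, ENNReal.ofReal_ne_top⟩),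
    ENNReal.toReal_mul, ENNReal.toReal_mul,
    ENNReal.toReal_add ENNReal.ofReal_ne_top ENNReal.ofReal_ne_top,
    ENNReal.toReal_ofReal (Real.exp_nonneg ε),
    ENNReal.toReal_ofReal (le_of_lt hδ0), ← hGconv n'] at hfinal
  calc G n S ≤ Real.exp ε * Real.exp ε * G n' S + (δ + δ) := hfinal
    _ = Real.exp (2 * ε) * G n' S + 2 * δ := by
        rw [← Real.exp_add, two_mul]; ring
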